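/- Let β, β', α, α' ∈ Π_aff^{re,+} with α + α' = c and β + β' = c, and suppose β ≠ α. Then (s_β s_{β'})^m ≠ (s_α s_{α'})^m for every positive integer m. -/
import Mathlib


open scoped BigOperators

namespace AffA

/-- Elements `⟨w, λ⟩` representing `w · t_λ` in the affine Weyl group
`W_aff = W ⋉ Q∨` of type `A_{n-1}^{(1)}`; the translation part `λ` is recorded
in `ε`-coordinates. -/
@[ext]
structure Aff (n : ℕ) where
  w : Equiv.Perm (Fin n)
  t : Fin n → ℤ

namespace Aff

variable {n : ℕ}

instance : Nonempty (Aff n) := ⟨⟨1, 0⟩⟩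

/-- multiplication: `(w t_λ)(v t_μ) = (wv) t_{v⁻¹λ + μ}`. -/
def mul' (x y : Aff n) : Aff n := ⟨x.w * y.w, fun i => x.t (y.w i) + y.t i⟩

def inv' (x : Aff n) : Aff n := ⟨x.w⁻¹, fun i => - x.t (x.w⁻¹ i)⟩

instance : Group (Aff n) where
  mul := mul'
  one := ⟨1, 0⟩
  inv := inv'
  mul_assoc a b c := by
    show mul' (mul' a b) c = mul' a (mul' b c)
    simp only [mul', Aff.mk.injEq]
    refine ⟨mul_assoc _ _ _, funext fun i => ?_⟩
    simp [Equiv.Perm.mul_apply, add_assoc]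
  one_mul a := by
    obtain ⟨aw, av⟩ := a
    show mul' ⟨1, 0⟩ ⟨aw, av⟩ = ⟨aw, av⟩
    simp only [mul', Aff.mk.injEq]
    exact ⟨one_mul _, funext fun i => by simp⟩
  mul_one a := by
    obtain ⟨aw, av⟩ := a
    show mul' ⟨aw, av⟩ ⟨1, 0⟩ = ⟨aw, av⟩
    simp only [mul', Aff.mk.injEq]
    exact ⟨mul_one _, funext fun i => by simp⟩
  inv_mul_cancel a := by
    obtain ⟨aw, av⟩ := a
    show mul' (inv' ⟨aw, av⟩) ⟨aw, av⟩ = ⟨1, 0⟩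
    simp only [mul', inv', Aff.mk.injEq]
    exact ⟨inv_mul_cancel _, funext fun i => by simp⟩

/-- cyclic successor on the vertices `α_0, …, α_{n-1}` of the affine Dynkin diagram. -/
def fsucc (i : Fin n) : Fin n :=
  ⟨(i.val + 1) % n, Nat.mod_lt _ (Nat.lt_of_le_of_lt (Nat.zero_le _) i.isLt)⟩

/-- the coefficient of `α_0`. -/
def coeff0 (a : Fin n → ℤ) : ℤ := if h : 0 < n then a ⟨0, h⟩ else 0

/-- the `ε`-coordinates of the finite part of an element of the affine root
lattice written in the coordinates of the simple roots `α_0, …, α_{n-1}`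
(`δ` is sent to `0`). -/
def finPart (a : Fin n → ℤ) : Fin n → ℤ := fun i => a (fsucc i) - a i

/-- `c = δ = α_0 + α_1 + ⋯ + α_{n-1}`, in simple root coordinates. -/
def cvec (n : ℕ) : Fin n → ℤ := fun _ => 1

/-- the affine Cartan matrix of type `A_{n-1}^{(1)}` (for `n ≥ 3`). -/
def cartan (i j : Fin n) : ℤ :=
  if i = j then 2 else if j = fsucc i ∨ i = fsucc j then -1 else 0

/-- the natural pairing `⟨a, b∨⟩` of elements of the affine root lattice
(simple root coordinates). -/
def pairing (a b : Fin n → ℤ) : ℤ := ∑ i : Fin n, ∑ j : Fin n, a i * cartan i j * b j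

/-- real roots of the affine root system: lattice vectors of norm `2`. -/
def IsRealRoot (a : Fin n → ℤ) : Prop := pairing a a = 2

/-- affine positive real roots: real roots with nonnegative coordinates. -/
def IsPosRoot (a : Fin n → ℤ) : Prop := IsRealRoot a ∧ ∀ i, 0 ≤ a i

/-- perpendicularity of affine roots. -/
def Perp (a b : Fin n → ℤ) : Prop := pairing a b = 0

/-- the support of an affine root. -/
def supp (a : Fin n → ℤ) : Finset (Fin n) := Finset.univ.filter fun i => a i ≠ 0

/-- the supports of `a` and `b` are disconnected in the affine Dynkin diagram
(a cycle on `α_0, …, α_{n-1}`): no vertex of one is equal or adjacent to a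
vertex of the other. -/
def Disconn (a b : Fin n → ℤ) : Prop :=
  ∀ i j : Fin n, a i ≠ 0 → b j ≠ 0 → i ≠ j ∧ j ≠ fsucc i ∧ i ≠ fsucc j

/-- for roots `a, b < c` (0–1 vectors), `a ∩ b = Σ_{α_i ∈ supp a ∩ supp b} α_i`. -/
def inter (a b : Fin n → ℤ) : Fin n → ℤ :=
  fun i => if a i ≠ 0 ∧ b i ≠ 0 then 1 else 0

instance : Nonempty (Equiv.Perm (Fin n)) := ⟨1⟩

/-- the reflection `s_β = s_α t_{mα}` associated to the real root `β = α + mδ`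
(given in simple root coordinates). -/
noncomputable def sref (a : Fin n → ℤ) : Aff n :=
  ⟨Classical.epsilon fun w : Equiv.Perm (Fin n) => ∃ p q : Fin n,
      finPart a = Pi.single p 1 - Pi.single q 1 ∧ w = Equiv.swap p q,
    fun i => coeff0 a * finPart a i⟩

/-- the simple reflections `s_0, …, s_{n-1}`. -/
noncomputable def simple (i : Fin n) : Aff n := sref (Pi.single i 1)

/-- the Coxeter length, via the Iwahori–Matsumoto formula
`ℓ(w t_λ) = Σ_{γ ∈ Π⁺} |χ(w·γ < 0) + ⟨λ, γ⟩|`. -/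
def len (x : Aff n) : ℕ :=
  ∑ p : Fin n, ∑ q : Fin n,
    if p < q then ((if x.w q < x.w p then (1 : ℤ) else 0) + (x.t p - x.t q)).natAbs else 0

/-- translation `t_v` by an element `v` of the (co)root lattice given in
`ε`-coordinates. -/
def trE (v : Fin n → ℤ) : Aff n := ⟨1, v⟩

/-- a Bruhat step: an edge of the moment graph which increases the length. -/
def bstep (u v : Aff n) : Prop :=
  (∃ a, IsPosRoot a ∧ v = u * sref a) ∧ len u < len v

/-- the Bruhat order: `u ≤ v` iff there is an increasing chain from `u` to `v`
in the moment graph. -/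
def ble (u v : Aff n) : Prop := Relation.ReflTransGen bstep u v

/-- there is a chain in the moment graph from `u` to `v` of total degree `≤ d`. -/
def ChainTo (d : Fin n → ℤ) (u v : Aff n) : Prop :=
  ∃ l : List (Fin n → ℤ),
    (∀ b ∈ l, IsPosRoot b) ∧ l.sum ≤ d ∧ v = u * (l.map sref).prod

/-- the set of elements reachable from some `u' ≤ u` by a chain of degree `≤ d`. -/
def nbhdSet (d : Fin n → ℤ) (u : Aff n) : Set (Aff n) :=
  {v | ∃ u', ble u' u ∧ ChainTo d u' v}

/-- the combinatorial curve neighborhood `Γ_d(u)`: the Bruhat-maximal elements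
among those reachable from some `u' ≤ u` by a chain of degree `≤ d`. -/
def curveNbhd (d : Fin n → ℤ) (u : Aff n) : Set (Aff n) :=
  {v | v ∈ nbhdSet d u ∧ ∀ x ∈ nbhdSet d u, ble v x → x = v}

/-- one step of the Hecke product. -/
noncomputable def heckeStep (u : Aff n) (i : Fin n) : Aff n :=
  if len u < len (u * simple i) then u * simple i else u

/-- the Hecke product `u · v`: multiply `u` on the right, left to right, by the
letters of a reduced word for `v`. -/
noncomputable def heckeMul (u v : Aff n) : Aff n :=
  (Classical.epsilon fun l : List (Fin n) =>
      (l.map simple).prod = v ∧ l.length = len v).foldl heckeStep u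

/-- the Hecke product `s_{β_1} · s_{β_2} · ⋯ · s_{β_r}` of the reflections of a
list of roots. -/
noncomputable def heckeList (l : List (Fin n → ℤ)) : Aff n :=
  l.foldl (fun u b => heckeMul u (sref b)) 1

/-- the defining recursion for `z_d`: `z_0 = id` and `z_d = s_α · z_{d-α}`
(Hecke product), where `α` is any maximal root with `α ≤ d`. -/
inductive IsZ : (Fin n → ℤ) → Aff n → Prop
  | zero : IsZ 0 1
  | step {d a : Fin n → ℤ} {x : Aff n} :
      IsPosRoot a → a ≤ d →
      (∀ b, IsPosRoot b → b ≤ d → a ≤ b → b = a) →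
      IsZ (d - a) x → IsZ d (heckeMul (sref a) x)

end Aff
end AffA

namespace AffA.Aff

variable {n : ℕ}

def fpred (i : Fin n) : Fin n :=
  ⟨(i.val + (n-1)) % n, Nat.mod_lt _ (Nat.lt_of_le_of_lt (Nat.zero_le _) i.isLt)⟩

lemma fpred_fsucc (i : Fin n) : fpred (fsucc i) = i := by
  have hn : 0 < n := Nat.lt_of_le_of_lt (Nat.zero_le _) i.isLt
  apply Fin.ext
  show ((i.val + 1) % n + (n-1)) % n = i.val
  rw [Nat.mod_add_mod]
  have h : i.val + 1 + (n-1) = i.val + n := by omega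
  rw [h, Nat.add_mod_right, Nat.mod_eq_of_lt i.isLt]

lemma fsucc_fpred (i : Fin n) : fsucc (fpred i) = i := by
  have hn : 0 < n := Nat.lt_of_le_of_lt (Nat.zero_le _) i.isLt
  apply Fin.ext
  show ((i.val + (n-1)) % n + 1) % n = i.val
  rw [Nat.mod_add_mod]
  have h : i.val + (n-1) + 1 = i.val + n := by omega
  rw [h, Nat.add_mod_right, Nat.mod_eq_of_lt i.isLt]

lemma fsucc_bijective : Function.Bijective (fsucc : Fin n → Fin n) :=
  ⟨Function.LeftInverse.injective fpred_fsucc,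
   Function.RightInverse.surjective fsucc_fpred⟩

lemma fsucc_ne (hn : 2 ≤ n) (i : Fin n) : fsucc i ≠ i := by
  intro h
  have hv : (i.val + 1) % n = i.val := congrArg Fin.val h
  have hi := i.isLt
  rcases Nat.lt_or_ge (i.val + 1) n with h1 | h1
  · rw [Nat.mod_eq_of_lt h1] at hv; omega
  · have h2 : i.val + 1 = n := by omega
    rw [h2, Nat.mod_self] at hv; omega

lemma fsucc_fsucc_ne (hn : 3 ≤ n) (i : Fin n) : fsucc (fsucc i) ≠ i := by
  intro h
  have hv : ((i.val + 1) % n + 1) % n = i.val := congrArg Fin.val h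
  rw [Nat.mod_add_mod] at hv
  have hi := i.isLt
  rcases Nat.lt_or_ge (i.val + 1 + 1) n with h1 | h1
  · rw [Nat.mod_eq_of_lt h1] at hv; omega
  · rcases Nat.eq_or_lt_of_le h1 with h2 | h2
    · rw [← h2, Nat.mod_self] at hv; omega
    · have h3 : i.val + 1 + 1 = n + 1 := by omega
      rw [h3] at hv
      have h4 : (n+1) % n = 1 := by
        rw [Nat.add_mod_left]
        exact Nat.mod_eq_of_lt (by omega)
      omega

lemma pairing_formula (hn : 3 ≤ n) (a b : Fin n → ℤ) :
    pairing a b = ∑ i : Fin n, (2 * a i * b i - a i * b (fsucc i) - a (fsucc i) * b i) := by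
  have h2 : 2 ≤ n := by omega
  have key : ∀ i : Fin n, ∑ j : Fin n, a i * cartan i j * b j
      = 2 * a i * b i - a i * b (fsucc i) - a i * b (fpred i) := by
    intro i
    have hne1 : fsucc i ≠ i := fsucc_ne h2 i
    have hne2 : fpred i ≠ i := by
      intro h
      have h' := congrArg fsucc h
      rw [fsucc_fpred] at h'
      exact fsucc_ne h2 i h'.symm
    have hne3 : fsucc i ≠ fpred i := by
      intro h
      have h' := congrArg fsucc h
      rw [fsucc_fpred] at h'
      exact fsucc_fsucc_ne hn i h' 
    have hpt : ∀ j : Fin n, a i * cartan i j * b j =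
        (if j = i then 2 * a i * b j else 0)
        + (if j = fsucc i then -(a i * b j) else 0)
        + (if j = fpred i then -(a i * b j) else 0) := by
      intro j
      unfold cartan
      by_cases h1 : i = j
      · have e1 : ¬ j = fsucc i := by rw [← h1]; exact Ne.symm hne1
        have e2 : ¬ j = fpred i := by rw [← h1]; exact Ne.symm hne2
        rw [if_pos h1, if_pos h1.symm, if_neg e1, if_neg e2]
        ring
      · have h1' : ¬ j = i := fun h => h1 h.symm
        rw [if_neg h1, if_neg h1']
        by_cases h2' : j = fsucc i
        · have e4 : ¬ j = fpred i := by rw [h2']; exact hne3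
          rw [if_pos (Or.inl h2'), if_pos h2', if_neg e4]
          ring
        · by_cases h3 : i = fsucc j
          · have e5 : j = fpred i := by rw [h3, fpred_fsucc]
            rw [if_pos (Or.inr h3), if_neg h2', if_pos e5]
            ring
          · have e6 : ¬ (j = fsucc i ∨ i = fsucc j) := by tauto
            have e7 : ¬ j = fpred i := fun h => h3 (by rw [h, fsucc_fpred])
            rw [if_neg e6, if_neg h2', if_neg e7]
            ring
    rw [Finset.sum_congr rfl (fun j _ => hpt j), Finset.sum_add_distrib,
        Finset.sum_add_distrib,
        Finset.sum_ite_eq' Finset.univ i, Finset.sum_ite_eq' Finset.univ (fsucc i),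
        Finset.sum_ite_eq' Finset.univ (fpred i)]
    simp only [Finset.mem_univ, if_true]
    ring
  unfold pairing
  rw [Finset.sum_congr rfl (fun i _ => key i)]
  have hre : ∑ i : Fin n, a (fsucc i) * b i = ∑ i : Fin n, a i * b (fpred i) :=
    Fintype.sum_bijective fsucc fsucc_bijective _ _ (fun i => by rw [fpred_fsucc])
  rw [Finset.sum_sub_distrib, Finset.sum_sub_distrib, ← hre,
      ← Finset.sum_sub_distrib, ← Finset.sum_sub_distrib]

lemma pairing_self_01 (hn : 3 ≤ n) (a : Fin n → ℤ) (h01 : ∀ i, a i = 0 ∨ a i = 1) :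
    pairing a a
      = 2 * ((Finset.univ.filter fun i : Fin n => a i = 1 ∧ a (fsucc i) = 0).card : ℤ) := by
  rw [pairing_formula hn]
  have hpt : ∀ i : Fin n, 2 * a i * a i - a i * a (fsucc i) - a (fsucc i) * a i
      = 2 * (if a i = 1 ∧ a (fsucc i) = 0 then 1 else 0) := by
    intro i
    rcases h01 i with h | h <;> rcases h01 (fsucc i) with h' | h' <;> rw [h, h'] <;> norm_num
  rw [Finset.sum_congr rfl (fun i _ => hpt i), ← Finset.mul_sum, Finset.sum_boole]

lemma asc_card (hn : 3 ≤ n) (a : Fin n → ℤ) (h01 : ∀ i, a i = 0 ∨ a i = 1) :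
    (Finset.univ.filter fun i : Fin n => a i = 0 ∧ a (fsucc i) = 1).card
      = (Finset.univ.filter fun i : Fin n => a i = 1 ∧ a (fsucc i) = 0).card := by
  have hpt : ∀ i : Fin n, a (fsucc i) - a i
      = (if a i = 0 ∧ a (fsucc i) = 1 then (1:ℤ) else 0)
        - (if a i = 1 ∧ a (fsucc i) = 0 then 1 else 0) := by
    intro i
    rcases h01 i with h | h <;> rcases h01 (fsucc i) with h' | h' <;> rw [h, h'] <;> norm_num
  have key : ∑ i : Fin n, (a (fsucc i) - a i) = 0 := by
    rw [Finset.sum_sub_distrib]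
    have hshift : ∑ i : Fin n, a (fsucc i) = ∑ i : Fin n, a i :=
      Fintype.sum_bijective fsucc fsucc_bijective _ _ (fun i => rfl)
    rw [hshift, sub_self]
  rw [Finset.sum_congr rfl (fun i _ => hpt i), Finset.sum_sub_distrib,
      Finset.sum_boole, Finset.sum_boole, sub_eq_zero] at key
  exact_mod_cast key

lemma root_struct (hn : 3 ≤ n) {a a' : Fin n → ℤ}
    (ha : IsPosRoot a) (ha' : IsPosRoot a') (hc : a + a' = cvec n) :
    ∃ p q : Fin n, p ≠ q ∧ a p = 1 ∧ a (fsucc p) = 0 ∧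
      finPart a = Pi.single q 1 - Pi.single p 1 ∧ (∀ i, a i = 0 ∨ a i = 1) := by
  have hsum : ∀ i, a i + a' i = 1 := fun i => congrFun hc i
  have h01 : ∀ i, a i = 0 ∨ a i = 1 := by
    intro i; have h1 := ha.2 i; have h2 := ha'.2 i; have h3 := hsum i; omega
  have hD := pairing_self_01 hn a h01
  rw [ha.1] at hD
  have hcard : (Finset.univ.filter fun i : Fin n => a i = 1 ∧ a (fsucc i) = 0).card = 1 := by
    omega
  have hcardA : (Finset.univ.filter fun i : Fin n => a i = 0 ∧ a (fsucc i) = 1).card = 1 := by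
    rw [asc_card hn a h01, hcard]
  obtain ⟨p, hp⟩ := Finset.card_eq_one.mp hcard
  obtain ⟨q, hq⟩ := Finset.card_eq_one.mp hcardA
  have hdesc : ∀ i : Fin n, (a i = 1 ∧ a (fsucc i) = 0) ↔ i = p := by
    intro i
    constructor
    · intro h
      have hmem : i ∈ Finset.univ.filter fun i : Fin n => a i = 1 ∧ a (fsucc i) = 0 :=
        Finset.mem_filter.mpr ⟨Finset.mem_univ i, h⟩
      rw [hp] at hmem; exact Finset.mem_singleton.mp hmem
    · intro hip
      have hmem : i ∈ Finset.univ.filter fun i : Fin n => a i = 1 ∧ a (fsucc i) = 0 := by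
        rw [hp, Finset.mem_singleton]; exact hip
      exact (Finset.mem_filter.mp hmem).2
  have hasc : ∀ i : Fin n, (a i = 0 ∧ a (fsucc i) = 1) ↔ i = q := by
    intro i
    constructor
    · intro h
      have hmem : i ∈ Finset.univ.filter fun i : Fin n => a i = 0 ∧ a (fsucc i) = 1 :=
        Finset.mem_filter.mpr ⟨Finset.mem_univ i, h⟩
      rw [hq] at hmem; exact Finset.mem_singleton.mp hmem
    · intro hiq
      have hmem : i ∈ Finset.univ.filter fun i : Fin n => a i = 0 ∧ a (fsucc i) = 1 := by
        rw [hq, Finset.mem_singleton]; exact hiq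
      exact (Finset.mem_filter.mp hmem).2
  have hpmem : a p = 1 ∧ a (fsucc p) = 0 := (hdesc p).mpr rfl
  have hqmem : a q = 0 ∧ a (fsucc q) = 1 := (hasc q).mpr rfl
  refine ⟨p, q, ?_, hpmem.1, hpmem.2, ?_, h01⟩
  · intro h; rw [h] at hpmem
    have := hpmem.1; have := hqmem.1; omega
  · funext i
    have hi1 := h01 i
    have hi2 := h01 (fsucc i)
    simp only [finPart, Pi.sub_apply, Pi.single_apply]
    by_cases hip : i = p
    · subst hip
      have hpq : ¬ i = q := by
        intro h; rw [h] at hpmem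
        have := hpmem.1; have := hqmem.1; omega
      rw [if_neg hpq, if_pos rfl]
      have := hpmem.1; have := hpmem.2; omega
    · by_cases hiq : i = q
      · subst hiq
        rw [if_pos rfl, if_neg hip]
        have := hqmem.1; have := hqmem.2; omega
      · rw [if_neg hiq, if_neg hip]
        have h1 : ¬ (a i = 1 ∧ a (fsucc i) = 0) := fun h => hip ((hdesc i).mp h)
        have h2 : ¬ (a i = 0 ∧ a (fsucc i) = 1) := fun h => hiq ((hasc i).mp h)
        omega

lemma finPart_compl {a a' : Fin n → ℤ} (hc : a + a' = cvec n) :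
    finPart a' = -finPart a := by
  funext i
  have h1 : a (fsucc i) + a' (fsucc i) = 1 := congrFun hc (fsucc i)
  have h2 : a i + a' i = 1 := congrFun hc i
  simp only [finPart, Pi.neg_apply]
  omega

lemma sref_w_eq {a a' : Fin n → ℤ} (hc : a + a' = cvec n) :
    (sref a').w = (sref a).w := by
  have hne := finPart_compl hc
  have hpred : (fun w : Equiv.Perm (Fin n) => ∃ p q : Fin n,
      finPart a' = Pi.single p 1 - Pi.single q 1 ∧ w = Equiv.swap p q)
      = (fun w : Equiv.Perm (Fin n) => ∃ p q : Fin n,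
      finPart a = Pi.single p 1 - Pi.single q 1 ∧ w = Equiv.swap p q) := by
    funext w
    apply propext
    constructor
    · rintro ⟨p, q, hf, rfl⟩
      exact ⟨q, p, by rw [← neg_sub, ← hf, hne, neg_neg], Equiv.swap_comm p q⟩
    · rintro ⟨p, q, hf, rfl⟩
      exact ⟨q, p, by rw [← neg_sub, ← hf, hne], Equiv.swap_comm p q⟩
  show Classical.epsilon _ = Classical.epsilon _
  rw [hpred]

lemma sref_mul (hn : 3 ≤ n) {a a' : Fin n → ℤ}
    (ha : IsPosRoot a) (ha' : IsPosRoot a') (hc : a + a' = cvec n) :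
    sref a * sref a' = Aff.mk 1 (fun i => - finPart a i) := by
  obtain ⟨p, q, hpq, hap, hasp, hf, h01⟩ := root_struct hn ha ha' hc
  have hex : ∃ w : Equiv.Perm (Fin n), ∃ p' q' : Fin n,
      finPart a = Pi.single p' 1 - Pi.single q' 1 ∧ w = Equiv.swap p' q' :=
    ⟨Equiv.swap q p, q, p, hf, rfl⟩
  obtain ⟨p', q', hf', hw⟩ := Classical.epsilon_spec hex
  have hwσ : (sref a).w = Equiv.swap p' q' := hw
  have hp'q' : p' ≠ q' := by
    intro h
    have h1 : finPart a q = 1 := by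
      rw [hf]
      simp [Pi.single_apply, Ne.symm hpq]
    rw [hf', h] at h1
    simp at h1
  have hflip : ∀ i, finPart a ((sref a).w i) = - finPart a i := by
    intro i
    rw [hwσ]
    by_cases h1 : i = p'
    · subst h1
      rw [Equiv.swap_apply_left, hf']
      simp [Pi.single_apply, hp'q', Ne.symm hp'q']
    · by_cases h2 : i = q'
      · subst h2
        rw [Equiv.swap_apply_right, hf']
        simp [Pi.single_apply, hp'q', Ne.symm hp'q']
      · rw [Equiv.swap_apply_of_ne_of_ne h1 h2, hf']
        simp [Pi.single_apply, h1, h2]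
  have hcoeff : coeff0 a + coeff0 a' = 1 := by
    have h0 : 0 < n := by omega
    simp only [coeff0, dif_pos h0]
    exact congrFun hc ⟨0, h0⟩
  have hww : (sref a').w = (sref a).w := sref_w_eq hc
  show mul' (sref a) (sref a') = Aff.mk 1 (fun i => - finPart a i)
  refine Aff.ext ?_ ?_
  · show (sref a).w * (sref a').w = 1
    rw [hww, hwσ]
    exact Equiv.swap_mul_self p' q'
  · funext i
    show coeff0 a * finPart a ((sref a').w i) + coeff0 a' * finPart a' i = - finPart a i
    rw [hww, hflip i, finPart_compl hc]
    simp only [Pi.neg_apply]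
    linear_combination (- finPart a i) * hcoeff

lemma mk_one_pow (v : Fin n → ℤ) (m : ℕ) :
    (Aff.mk 1 v) ^ m = Aff.mk 1 (fun i => (m : ℤ) * v i) := by
  induction m with
  | zero =>
    rw [pow_zero]
    show (Aff.mk 1 (0 : Fin n → ℤ)) = _
    refine Aff.ext rfl ?_
    funext i
    simp
  | succ k ih =>
    rw [pow_succ, ih]
    show mul' (Aff.mk 1 fun i => (k:ℤ) * v i) (Aff.mk 1 v) = _
    refine Aff.ext ?_ ?_
    · show (1 : Equiv.Perm (Fin n)) * 1 = 1
      rw [one_mul]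
    · funext i
      show (k:ℤ) * v ((1 : Equiv.Perm (Fin n)) i) + v i = ((k+1 : ℕ):ℤ) * v i
      rw [Equiv.Perm.one_apply]
      push_cast
      ring

lemma eq_of_finPart_eq (h0 : 0 < n) {a b : Fin n → ℤ} (hf : finPart a = finPart b)
    (p : Fin n) (hp : a p = b p) : a = b := by
  have key : ∀ k, ∀ hk : k < n, a ⟨k, hk⟩ - b ⟨k, hk⟩ = a ⟨0, h0⟩ - b ⟨0, h0⟩ := by
    intro k
    induction k with
    | zero => intro hk; rfl
    | succ j ih =>
      intro hk
      have hj : j < n := by omega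
      have hs : fsucc ⟨j, hj⟩ = ⟨j+1, hk⟩ := by
        apply Fin.ext
        show (j+1) % n = j+1
        exact Nat.mod_eq_of_lt hk
      have h1 := congrFun hf ⟨j, hj⟩
      simp only [finPart, hs] at h1
      have h2 := ih hj
      omega
  have key' : ∀ i : Fin n, a i - b i = a ⟨0, h0⟩ - b ⟨0, h0⟩ := by
    intro i
    have := key i.val i.isLt
    rwa [Fin.eta] at this
  have hz : a ⟨0, h0⟩ - b ⟨0, h0⟩ = 0 := by
    have := key' p
    omega
  funext i
  have := key' i
  omega

end AffA.Aff


open AffA Aff in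
/-- if `α + α' = β + β' = c` and `β ≠ α` then
`(s_β s_{β'})^m ≠ (s_α s_{α'})^m` for every positive integer `m`. -/
theorem pow_ne (n : ℕ) (hn : 3 ≤ n) (β β' α α' : Fin n → ℤ)
    (hβ : IsPosRoot β) (hβ' : IsPosRoot β') (hα : IsPosRoot α) (hα' : IsPosRoot α')
    (hcβ : β + β' = cvec n) (hcα : α + α' = cvec n) (hne : β ≠ α) :
    ∀ m : ℕ, 1 ≤ m → (sref β * sref β') ^ m ≠ (sref α * sref α') ^ m := by
  intro m hm heq
  obtain ⟨pβ, qβ, hpqβ, hβp1, hβp0, hfβ, h01β⟩ := root_struct hn hβ hβ' hcβ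
  obtain ⟨pα, qα, hpqα, hαp1, hαp0, hfα, h01α⟩ := root_struct hn hα hα' hcα
  rw [sref_mul hn hβ hβ' hcβ, sref_mul hn hα hα' hcα, mk_one_pow, mk_one_pow] at heq
  have ht := congrArg Aff.t heq
  have hm0 : (m : ℤ) ≠ 0 := Int.natCast_ne_zero.mpr (by omega)
  have hfeq : finPart β = finPart α := by
    funext i
    have h1 := congrFun ht i
    have h2 : -finPart β i = -finPart α i := mul_left_cancel₀ hm0 h1
    omega
  have hαpβ : α pβ = 1 := by
    have h1 : finPart α pβ = -1 := by
      rw [← hfeq, hfβ]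
      simp [Pi.single_apply, hpqβ]
    simp only [finPart] at h1
    have h2 := h01α pβ
    have h3 := h01α (fsucc pβ)
    omega
  exact hne (eq_of_finPart_eq (by omega) hfeq pβ (by rw [hβp1, hαpβ]))
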